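/- arXiv:2001.07805 — 3 statements merged into one kernel-verified Lean document; each statement's English description precedes it below -/
import Mathlib

section
/- (Theorem 2, additive corruption, general dimension) Let p* be a Borel probability measure on ℝ^d that is halfspace-symmetric with center μ* and has decay function h. Let ε ∈ [0, 1), let r be any Borel probability measure on ℝ^d, let p = (1 − ε)p* + εr, and let x be a Tukey median of p. Then D(x, p*) ≥ ((1 − ε)(1 − h(0)) − ε)/(1 − ε), and consequently for every t ≥ 0 with h(t) < ((1 − ε)(1 − h(0)) − ε)/(1 − ε) we have ‖x − μ*‖ ≤ t. -/
open MeasureTheory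
open scoped RealInnerProductSpace ENNReal

noncomputable section

abbrev Euc (d : ℕ) := EuclideanSpace ℝ (Fin d)

/-- Tukey depth of a point `μ` w.r.t. a measure `p`: the infimum over nonzero
directions `v` of the mass of the halfspace `{x | ⟪v, x - μ⟫ ≥ 0}`. -/
def tukeyDepth {d : ℕ} (μ : Euc d) (p : Measure (Euc d)) : ℝ :=
  ⨅ v : {v : Euc d // v ≠ 0}, (p {x | 0 ≤ ⟪(v : Euc d), x - μ⟫}).toReal

/-- `x` is a Tukey median of `p` if it maximizes the Tukey depth. -/
def IsTukeyMedian {d : ℕ} (x : Euc d) (p : Measure (Euc d)) : Prop :=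
  ∀ y : Euc d, tukeyDepth y p ≤ tukeyDepth x p

/-- Total variation distance: supremum over Borel sets `A` of `p A - q A`. -/
def tvDist {d : ℕ} (p q : Measure (Euc d)) : ℝ :=
  ⨆ A : {A : Set (Euc d) // MeasurableSet A}, ((p A).toReal - (q A).toReal)

/-- The halfspace metric `TV~(p, q)`. -/
def halfspaceDist {d : ℕ} (p q : Measure (Euc d)) : ℝ :=
  ⨆ vt : Euc d × ℝ,
    |(p {x | vt.2 ≤ ⟪vt.1, x⟫}).toReal - (q {x | vt.2 ≤ ⟪vt.1, x⟫}).toReal|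

/-- Halfspace symmetry around `μ`: every one-dimensional projection of `X - μ`
is symmetric in distribution. -/
def IsHalfspaceSymmetric {d : ℕ} (p : Measure (Euc d)) (μ : Euc d) : Prop :=
  ∀ v : Euc d,
    p.map (fun x => ⟪v, x - μ⟫) = p.map (fun x => -⟪v, x - μ⟫)

/-- Decay function `h(t)` of a measure `p` centered at `μ`. -/
def decay {d : ℕ} (p : Measure (Euc d)) (μ : Euc d) (t : ℝ) : ℝ :=
  ⨆ v : {v : Euc d // ‖v‖ ≤ 1}, (p {x | t < ⟪(v : Euc d), x - μ⟫}).toReal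

lemma continuous_inner_sub {d : ℕ} (v μ : Euc d) :
    Continuous fun y : Euc d => ⟪v, y - μ⟫ :=
  continuous_const.inner (continuous_id.sub continuous_const)

/-- any halfspace probability (unit direction, level t) is ≤ decay t -/
lemma le_decay {d : ℕ} (q : Measure (Euc d)) [IsProbabilityMeasure q]
    (μ : Euc d) (t : ℝ) (u : Euc d) (hu : ‖u‖ ≤ 1) :
    (q {y | t < ⟪u, y - μ⟫}).toReal ≤ decay q μ t := by
  have hbdd : BddAbove (Set.range fun v : {v : Euc d // ‖v‖ ≤ 1} =>
      (q {x | t < ⟪(v : Euc d), x - μ⟫}).toReal) := by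
    refine ⟨1, ?_⟩
    rintro _ ⟨v, rfl⟩
    have h1 : q {x | t < ⟪(v : Euc d), x - μ⟫} ≤ 1 := prob_le_one
    calc (q {x | t < ⟪(v : Euc d), x - μ⟫}).toReal ≤ (1 : ℝ≥0∞).toReal :=
          ENNReal.toReal_mono (by simp) h1
      _ = 1 := by simp
  exact le_ciSup hbdd ⟨u, hu⟩

/-- the halfspace-depth per-direction lower bound at the center -/
lemma center_halfspace_ge {d : ℕ} (q : Measure (Euc d)) [IsProbabilityMeasure q]
    (μ : Euc d) (hsym : IsHalfspaceSymmetric q μ) (v : Euc d) (hv : v ≠ 0) :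
    1 - decay q μ 0 ≤ (q {y | 0 ≤ ⟪v, y - μ⟫}).toReal := by
  set f : Euc d → ℝ := fun y => ⟪v, y - μ⟫ with hf
  have hcf : Continuous f := continuous_inner_sub v μ
  have hmS : MeasurableSet {y : Euc d | 0 ≤ f y} :=
    measurableSet_le measurable_const hcf.measurable
  -- complement of S is {f < 0}
  have hcompl : {y : Euc d | 0 ≤ f y}ᶜ = {y | f y < 0} := by
    ext y; simp [not_le]
  -- symmetry: q {f < 0} = q {0 < f}
  have hsymm : q {y | f y < 0} = q {y | 0 < f y} := by
    have h := hsym v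
    have h1 : q {y | f y < 0} = (q.map f) (Set.Iio 0) := by
      rw [Measure.map_apply hcf.measurable measurableSet_Iio]
      rfl
    have h2 : (q.map fun y => -f y) (Set.Iio 0) = q {y | 0 < f y} := by
      rw [Measure.map_apply (f := fun y => -f y) hcf.neg.measurable measurableSet_Iio]
      congr 1
      ext y
      simp [neg_lt_zero]
    rw [h1, h, h2]
  -- rescale to a unit vector
  set u : Euc d := ‖v‖⁻¹ • v with hu
  have hnv : (0:ℝ) < ‖v‖ := norm_pos_iff.mpr hv
  have hun : ‖u‖ ≤ 1 := by
    rw [hu, norm_smul, norm_inv, norm_norm, inv_mul_cancel₀ (ne_of_gt hnv)]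
  have hsets : {y : Euc d | 0 < f y} = {y | 0 < ⟪u, y - μ⟫} := by
    ext y
    have : ⟪u, y - μ⟫ = ‖v‖⁻¹ * ⟪v, y - μ⟫ := real_inner_smul_left v (y - μ) ‖v‖⁻¹
    simp only [Set.mem_setOf_eq, this, hf]
    constructor
    · intro h; positivity
    · intro h; nlinarith [inv_pos.mpr hnv]
  have hdec : (q {y | f y < 0}).toReal ≤ decay q μ 0 := by
    rw [hsymm, hsets]
    exact le_decay q μ 0 u hun
  have hsum : (q {y | 0 ≤ f y}).toReal + (q {y | f y < 0}).toReal = 1 := by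
    have := measure_add_measure_compl (μ := q) hmS
    rw [hcompl] at this
    have := congrArg ENNReal.toReal this
    rwa [ENNReal.toReal_add (by simp) (by simp), measure_univ, ENNReal.toReal_one] at this
  linarith

/-- **Theorem 2, additive corruption, general dimension.**
If `p*` is halfspace-symmetric with center `μ*` and decay function `h`,
`p = (1 − ε) p* + ε r`, and `x` is a Tukey median of `p`, then
`D(x, p*) ≥ ((1 − ε)(1 − h(0)) − ε)/(1 − ε)`, and consequently for every `t ≥ 0`
with `h(t) < ((1 − ε)(1 − h(0)) − ε)/(1 − ε)` we have `‖x − μ*‖ ≤ t`. -/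
theorem tukey_median_additive_corruption {d : ℕ} (hd : 0 < d)
    (pstar r : Measure (Euc d))
    [IsProbabilityMeasure pstar] [IsProbabilityMeasure r]
    (μstar : Euc d) (hsym : IsHalfspaceSymmetric pstar μstar)
    (ε : ℝ) (hε0 : 0 ≤ ε) (hε1 : ε < 1)
    (p : Measure (Euc d))
    (hp : p = ENNReal.ofReal (1 - ε) • pstar + ENNReal.ofReal ε • r)
    (x : Euc d) (hx : IsTukeyMedian x p) :
    ((1 - ε) * (1 - decay pstar μstar 0) - ε) / (1 - ε) ≤ tukeyDepth x pstar ∧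
    ∀ t : ℝ, 0 ≤ t →
      decay pstar μstar t < ((1 - ε) * (1 - decay pstar μstar 0) - ε) / (1 - ε) →
      ‖x - μstar‖ ≤ t := by
  have h1ε : (0:ℝ) < 1 - ε := by linarith
  -- mixture formula
  have hpS : ∀ S : Set (Euc d),
      (p S).toReal = (1 - ε) * (pstar S).toReal + ε * (r S).toReal := by
    intro S
    rw [hp]
    show ((ENNReal.ofReal (1-ε) • pstar) S + (ENNReal.ofReal ε • r) S).toReal = _
    rw [Measure.smul_apply, Measure.smul_apply, smul_eq_mul, smul_eq_mul,
      ENNReal.toReal_add (ENNReal.mul_ne_top ENNReal.ofReal_ne_top (measure_ne_top _ _))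
        (ENNReal.mul_ne_top ENNReal.ofReal_ne_top (measure_ne_top _ _)),
      ENNReal.toReal_mul, ENNReal.toReal_mul,
      ENNReal.toReal_ofReal (le_of_lt h1ε), ENNReal.toReal_ofReal hε0]
  -- index type nonempty and bounds for the infimum
  haveI : Nonempty {v : Euc d // v ≠ 0} := by
    refine ⟨⟨EuclideanSpace.single ⟨0, hd⟩ (1:ℝ), ?_⟩⟩
    intro h
    have := congrArg (fun z : Euc d => z ⟨0, hd⟩) h
    simp [EuclideanSpace.single_apply] at this
  have hbb : ∀ (μ : Euc d) (q : Measure (Euc d)), BddBelow (Set.range fun v : {v : Euc d // v ≠ 0} =>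
      (q {y | 0 ≤ ⟪(v : Euc d), y - μ⟫}).toReal) := by
    intro μ q
    exact ⟨0, by rintro _ ⟨v, rfl⟩; exact ENNReal.toReal_nonneg⟩
  set h0 := decay pstar μstar 0 with hh0
  set K := (1 - ε) * (1 - h0) with hK
  -- D(μ*, p) ≥ K
  have hDμ : K ≤ tukeyDepth μstar p := by
    refine le_ciInf fun v => ?_
    rw [hpS]
    have h1 := center_halfspace_ge pstar μstar hsym v v.2
    have h2 : (0:ℝ) ≤ ε * (r {y | 0 ≤ ⟪(v : Euc d), y - μstar⟫}).toReal := by positivity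
    nlinarith [h1, ENNReal.toReal_nonneg (a := pstar {y | 0 ≤ ⟪(v : Euc d), y - μstar⟫})]
  have hDx : K ≤ tukeyDepth x p := le_trans hDμ (hx μstar)
  -- per-direction: (K - ε)/(1-ε) ≤ pstar halfspace
  have hper : ∀ v : {v : Euc d // v ≠ 0},
      (K - ε) / (1 - ε) ≤ (pstar {y | 0 ≤ ⟪(v : Euc d), y - x⟫}).toReal := by
    intro v
    have hle : tukeyDepth x p ≤ (p {y | 0 ≤ ⟪(v : Euc d), y - x⟫}).toReal :=
      ciInf_le (hbb x p) v
    rw [hpS] at hle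
    have hr1 : (r {y | 0 ≤ ⟪(v : Euc d), y - x⟫}).toReal ≤ 1 := by
      calc (r {y | 0 ≤ ⟪(v : Euc d), y - x⟫}).toReal ≤ (1:ℝ≥0∞).toReal :=
            ENNReal.toReal_mono (by simp) prob_le_one
        _ = 1 := by simp
    rw [div_le_iff₀ h1ε]
    nlinarith
  have hmain : (K - ε) / (1 - ε) ≤ tukeyDepth x pstar := le_ciInf hper
  refine ⟨hmain, fun t ht hlt => ?_⟩
  by_contra hgt
  push_neg at hgt
  -- unit vector in the direction of x - μ*
  set w : Euc d := x - μstar with hw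
  have hnw : (0:ℝ) < ‖w‖ := lt_of_le_of_lt ht hgt
  have hwne : w ≠ 0 := by
    intro h; rw [h] at hnw; simp at hnw
  set u : Euc d := ‖w‖⁻¹ • w with hu
  have hune : u ≠ 0 := smul_ne_zero (inv_ne_zero (ne_of_gt hnw)) hwne
  have hun : ‖u‖ ≤ 1 := by
    rw [hu, norm_smul, norm_inv, norm_norm, inv_mul_cancel₀ (ne_of_gt hnw)]
  have hsub : {y : Euc d | 0 ≤ ⟪u, y - x⟫} ⊆ {y : Euc d | t < ⟪u, y - μstar⟫} := by
    intro y hy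
    have hdecomp : ⟪u, y - μstar⟫ = ⟪u, y - x⟫ + ⟪u, w⟫ := by
      rw [← inner_add_right]
      congr 1
      rw [hw]; abel
    have huw : ⟪u, w⟫ = ‖w‖ := by
      rw [hu, real_inner_smul_left, real_inner_self_eq_norm_sq]
      field_simp
    have : (0:ℝ) ≤ ⟪u, y - x⟫ := hy
    simp only [Set.mem_setOf_eq]
    rw [hdecomp, huw]
    linarith
  have hub : tukeyDepth x pstar ≤ decay pstar μstar t := by
    calc tukeyDepth x pstar ≤ (pstar {y | 0 ≤ ⟪u, y - x⟫}).toReal :=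
          ciInf_le (hbb x pstar) ⟨u, hune⟩
      _ ≤ (pstar {y | t < ⟪u, y - μstar⟫}).toReal :=
          ENNReal.toReal_mono (measure_ne_top _ _) (measure_mono hsub)
      _ ≤ decay pstar μstar t := le_decay pstar μstar t u hun
  linarith [hmain, hub, hlt]

end
end

section
/- (Theorem 2, additive corruption, dimension one) Let p* be a Borel probability measure on ℝ that is halfspace-symmetric with center μ* and has decay function h. Let ε ∈ [0, 1), let r be any Borel probability measure on ℝ, let p = (1 − ε)p* + εr, and let x be a Tukey median of p. Then D(x, p*) ≥ max(((1 − ε)(1 − h(0)) − ε)/(1 − ε), (1/2 − ε)/(1 − ε)), and consequently for every t ≥ 0 with h(t) < max(((1 − ε)(1 − h(0)) − ε)/(1 − ε), (1/2 − ε)/(1 − ε)) we have |x − μ*| ≤ t. -/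
open MeasureTheory
open scoped ENNReal

noncomputable section

/-- One-dimensional Tukey depth: `min (p [μ, ∞)) (p (-∞, μ])`. -/
def tukeyDepth1 (μ : ℝ) (p : Measure ℝ) : ℝ :=
  min (p (Set.Ici μ)).toReal (p (Set.Iic μ)).toReal

/-- `x` is a Tukey median (in dimension one) of `p`. -/
def IsTukeyMedian1 (x : ℝ) (p : Measure ℝ) : Prop :=
  ∀ y : ℝ, tukeyDepth1 y p ≤ tukeyDepth1 x p

/-- Total variation distance on `ℝ`: supremum over Borel sets `A` of `p A - q A`. -/
def tvDist1 (p q : Measure ℝ) : ℝ :=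
  ⨆ A : {A : Set ℝ // MeasurableSet A}, ((p A).toReal - (q A).toReal)

/-- Halfspace symmetry on `ℝ` around `μ`: every projection `v * (x - μ)` is
symmetric in distribution. -/
def IsHalfspaceSymmetric1 (p : Measure ℝ) (μ : ℝ) : Prop :=
  ∀ v : ℝ, p.map (fun x => v * (x - μ)) = p.map (fun x => -(v * (x - μ)))

/-- Decay function on `ℝ` centered at `μ`. -/
def decay1 (p : Measure ℝ) (μ : ℝ) (t : ℝ) : ℝ :=
  ⨆ v : {v : ℝ // |v| ≤ 1}, (p {x | t < (v : ℝ) * (x - μ)}).toReal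

section Aux
open Filter Topology

lemma probToRealLeOne (p : Measure ℝ) [IsProbabilityMeasure p] (A : Set ℝ) :
    (p A).toReal ≤ 1 := by
  have := ENNReal.toReal_mono (by simp) (prob_le_one (μ := p) (s := A))
  simpa using this

lemma probToRealCompl (p : Measure ℝ) [IsProbabilityMeasure p] {A : Set ℝ}
    (hA : MeasurableSet A) : (p A).toReal + (p Aᶜ).toReal = 1 := by
  rw [← ENNReal.toReal_add (measure_ne_top p A) (measure_ne_top p Aᶜ),
    measure_add_measure_compl hA]
  simp

lemma decay1Ge (pstar : Measure ℝ) [IsProbabilityMeasure pstar] (μstar t v : ℝ)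
    (hv : |v| ≤ 1) :
    (pstar {x | t < v * (x - μstar)}).toReal ≤ decay1 pstar μstar t := by
  have hb : BddAbove (Set.range fun w : {w : ℝ // |w| ≤ 1} =>
      (pstar {x | t < (w : ℝ) * (x - μstar)}).toReal) := by
    refine ⟨1, ?_⟩
    rintro _ ⟨w, rfl⟩
    exact probToRealLeOne pstar _
  exact le_ciSup hb ⟨v, hv⟩

open Filter Topology in
lemma existsMedian (p : Measure ℝ) [IsProbabilityMeasure p] :
    ∃ m : ℝ, (1/2 : ℝ) ≤ (p (Set.Iic m)).toReal ∧ (1/2 : ℝ) ≤ (p (Set.Ici m)).toReal := by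
  set F : ℝ → ℝ := fun y => (p (Set.Iic y)).toReal with hF
  have hFmono : Monotone F := fun a b hab =>
    ENNReal.toReal_mono (measure_ne_top p _) (measure_mono (Set.Iic_subset_Iic.2 hab))
  set S : Set ℝ := {y | (1/2 : ℝ) ≤ F y} with hS
  -- S nonempty
  have hSne : S.Nonempty := by
    have hmono : Monotone fun n : ℕ => Set.Iic (n : ℝ) := fun a b hab =>
      Set.Iic_subset_Iic.2 (by exact_mod_cast hab)
    have hU : (⋃ n : ℕ, Set.Iic ((n : ℝ))) = Set.univ := by
      ext y
      simp only [Set.mem_iUnion, Set.mem_Iic, Set.mem_univ, iff_true]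
      obtain ⟨n, hn⟩ := exists_nat_ge y
      exact ⟨n, hn⟩
    have h1 : Tendsto (fun n : ℕ => p (Set.Iic ((n : ℝ)))) atTop (𝓝 (p Set.univ)) := by
      have := tendsto_measure_iUnion_atTop (μ := p) hmono
      rwa [hU] at this
    have h2 : Tendsto (fun n : ℕ => F (n : ℝ)) atTop (𝓝 1) := by
      have := (ENNReal.tendsto_toReal (measure_ne_top p Set.univ)).comp h1
      simpa [F, Function.comp_def] using this
    obtain ⟨n, hn⟩ := (h2.eventually (eventually_ge_nhds (by norm_num : (1/2 : ℝ) < 1))).exists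
    exact ⟨(n : ℝ), hn⟩
  -- S bounded below
  have hSbdd : BddBelow S := by
    have hanti : Antitone fun n : ℕ => Set.Iic (-(n : ℝ)) := fun a b hab =>
      Set.Iic_subset_Iic.2 (by exact_mod_cast neg_le_neg (by exact_mod_cast hab))
    have hI : (⋂ n : ℕ, Set.Iic (-(n : ℝ))) = ∅ := by
      ext y
      simp only [Set.mem_iInter, Set.mem_Iic, Set.mem_empty_iff_false, iff_false, not_forall,
        not_le]
      obtain ⟨n, hn⟩ := exists_nat_gt (-y)
      exact ⟨n, by linarith⟩
    have h1 : Tendsto (fun n : ℕ => p (Set.Iic (-(n : ℝ)))) atTop (𝓝 (p ∅)) := by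
      have := tendsto_measure_iInter_atTop (μ := p)
        (fun n => measurableSet_Iic.nullMeasurableSet) hanti ⟨0, measure_ne_top p _⟩
      rwa [hI] at this
    have h2 : Tendsto (fun n : ℕ => F (-(n : ℝ))) atTop (𝓝 0) := by
      have := (ENNReal.tendsto_toReal (measure_ne_top p ∅)).comp h1
      simpa [F, Function.comp_def] using this
    obtain ⟨n, hn⟩ := (h2.eventually (eventually_lt_nhds (by norm_num : (0 : ℝ) < 1/2))).exists
    refine ⟨-(n : ℝ), fun y hy => ?_⟩
    by_contra hlt
    push_neg at hlt
    exact absurd (le_trans hy (hFmono hlt.le)) (not_le.2 hn)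
  set m : ℝ := sInf S with hm
  refine ⟨m, ?_, ?_⟩
  · -- F m ≥ 1/2 via continuity from above
    have hanti : Antitone fun n : ℕ => Set.Iic (m + 1/((n : ℝ)+1)) := by
      intro a b hab
      apply Set.Iic_subset_Iic.2
      have : 1/((b : ℝ)+1) ≤ 1/((a : ℝ)+1) := by
        apply one_div_le_one_div_of_le (by positivity)
        exact_mod_cast add_le_add_left (by exact_mod_cast hab) 1
      linarith
    have hI : (⋂ n : ℕ, Set.Iic (m + 1/((n : ℝ)+1))) = Set.Iic m := by
      ext y
      simp only [Set.mem_iInter, Set.mem_Iic]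
      constructor
      · intro hall
        by_contra hlt
        push_neg at hlt
        obtain ⟨n, hn⟩ := exists_nat_one_div_lt (sub_pos.2 hlt)
        have := hall n
        linarith
      · intro h n
        have : (0:ℝ) < 1/((n : ℝ)+1) := by positivity
        linarith
    have h1 : Tendsto (fun n : ℕ => p (Set.Iic (m + 1/((n : ℝ)+1)))) atTop
        (𝓝 (p (Set.Iic m))) := by
      have := tendsto_measure_iInter_atTop (μ := p)
        (fun n => measurableSet_Iic.nullMeasurableSet) hanti ⟨0, measure_ne_top p _⟩
      rwa [hI] at this
    have h2 : Tendsto (fun n : ℕ => F (m + 1/((n : ℝ)+1))) atTop (𝓝 (F m)) :=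
      (ENNReal.tendsto_toReal (measure_ne_top p _)).comp h1
    refine ge_of_tendsto h2 (Filter.Eventually.of_forall fun n => ?_)
    have hlt : m < m + 1/((n : ℝ)+1) := by
      have : (0:ℝ) < 1/((n : ℝ)+1) := by positivity
      linarith
    obtain ⟨y, hyS, hy⟩ := exists_lt_of_csInf_lt hSne hlt
    exact le_trans hyS (hFmono hy.le)
  · -- p(Ici m) ≥ 1/2
    have hmono : Monotone fun n : ℕ => Set.Iic (m - 1/((n : ℝ)+1)) := by
      intro a b hab
      apply Set.Iic_subset_Iic.2
      have : 1/((b : ℝ)+1) ≤ 1/((a : ℝ)+1) := by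
        apply one_div_le_one_div_of_le (by positivity)
        exact_mod_cast add_le_add_left (by exact_mod_cast hab) 1
      linarith
    have hU : (⋃ n : ℕ, Set.Iic (m - 1/((n : ℝ)+1))) = Set.Iio m := by
      ext y
      simp only [Set.mem_iUnion, Set.mem_Iic, Set.mem_Iio]
      constructor
      · rintro ⟨n, hn⟩
        have : (0:ℝ) < 1/((n : ℝ)+1) := by positivity
        linarith
      · intro hlt
        obtain ⟨n, hn⟩ := exists_nat_one_div_lt (sub_pos.2 hlt)
        exact ⟨n, by linarith⟩
    have h1 : Tendsto (fun n : ℕ => p (Set.Iic (m - 1/((n : ℝ)+1)))) atTop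
        (𝓝 (p (Set.Iio m))) := by
      have := tendsto_measure_iUnion_atTop (μ := p) hmono
      rwa [hU] at this
    have h2 : Tendsto (fun n : ℕ => F (m - 1/((n : ℝ)+1))) atTop
        (𝓝 ((p (Set.Iio m)).toReal)) :=
      (ENNReal.tendsto_toReal (measure_ne_top p _)).comp h1
    have hIio : (p (Set.Iio m)).toReal ≤ 1/2 := by
      refine le_of_tendsto h2 (Filter.Eventually.of_forall fun n => ?_)
      have hnot : m - 1/((n : ℝ)+1) ∉ S := by
        intro hmem
        have := csInf_le hSbdd hmem
        have hpos : (0:ℝ) < 1/((n : ℝ)+1) := by positivity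
        rw [← hm] at this
        linarith
      simp only [hS, Set.mem_setOf_eq, not_le] at hnot
      exact hnot.le
    have hc := probToRealCompl p (measurableSet_Ici (a := m))
    rw [Set.compl_Ici] at hc
    linarith

end Aux

/-- **Theorem 2, additive corruption, dimension one.**
If `p*` on `ℝ` is halfspace-symmetric with center `μ*` and decay function `h`,
`p = (1 − ε) p* + ε r`, and `x` is a Tukey median of `p`, then
`D(x, p*) ≥ max(((1 − ε)(1 − h(0)) − ε)/(1 − ε), (1/2 − ε)/(1 − ε))`, and
consequently for every `t ≥ 0` with `h(t)` below that bound, `|x − μ*| ≤ t`. -/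
theorem tukey_median_additive_corruption_dim_one
    (pstar r : Measure ℝ)
    [IsProbabilityMeasure pstar] [IsProbabilityMeasure r]
    (μstar : ℝ) (hsym : IsHalfspaceSymmetric1 pstar μstar)
    (ε : ℝ) (hε0 : 0 ≤ ε) (hε1 : ε < 1)
    (p : Measure ℝ)
    (hp : p = ENNReal.ofReal (1 - ε) • pstar + ENNReal.ofReal ε • r)
    (x : ℝ) (hx : IsTukeyMedian1 x p) :
    max (((1 - ε) * (1 - decay1 pstar μstar 0) - ε) / (1 - ε)) ((1 / 2 - ε) / (1 - ε))
        ≤ tukeyDepth1 x pstar ∧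
    ∀ t : ℝ, 0 ≤ t →
      decay1 pstar μstar t <
        max (((1 - ε) * (1 - decay1 pstar μstar 0) - ε) / (1 - ε)) ((1 / 2 - ε) / (1 - ε)) →
      |x - μstar| ≤ t := by
  have h1ε : (0:ℝ) < 1 - ε := by linarith
  -- p is a probability measure
  haveI hpprob : IsProbabilityMeasure p := by
    constructor
    rw [hp]
    simp only [Measure.add_apply, Measure.smul_apply, smul_eq_mul, measure_univ, mul_one]
    rw [← ENNReal.ofReal_add (by linarith) hε0]
    norm_num
  -- decomposition of p on any set
  have hPA : ∀ A : Set ℝ, (p A).toReal = (1-ε)*(pstar A).toReal + ε*(r A).toReal := by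
    intro A
    rw [hp]
    simp only [Measure.add_apply, Measure.smul_apply, smul_eq_mul]
    rw [ENNReal.toReal_add (ENNReal.mul_ne_top ENNReal.ofReal_ne_top (measure_ne_top _ _))
      (ENNReal.mul_ne_top ENNReal.ofReal_ne_top (measure_ne_top _ _)),
      ENNReal.toReal_mul, ENNReal.toReal_mul, ENNReal.toReal_ofReal (by linarith),
      ENNReal.toReal_ofReal hε0]
  have hlow : ∀ A : Set ℝ, (1-ε)*(pstar A).toReal ≤ (p A).toReal := by
    intro A
    rw [hPA]
    have : 0 ≤ ε*(r A).toReal := mul_nonneg hε0 ENNReal.toReal_nonneg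
    linarith
  have hupp : ∀ A : Set ℝ, (p A).toReal ≤ (1-ε)*(pstar A).toReal + ε := by
    intro A
    rw [hPA]
    have h1 := probToRealLeOne r A
    nlinarith
  -- depth comparison lemmas
  have hdlow : ∀ y : ℝ, (1-ε) * tukeyDepth1 y pstar ≤ tukeyDepth1 y p := by
    intro y
    unfold tukeyDepth1
    refine le_min ?_ ?_
    · exact le_trans (mul_le_mul_of_nonneg_left (min_le_left _ _) h1ε.le) (hlow _)
    · exact le_trans (mul_le_mul_of_nonneg_left (min_le_right _ _) h1ε.le) (hlow _)
  have hdupp : tukeyDepth1 x p ≤ (1-ε) * tukeyDepth1 x pstar + ε := by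
    unfold tukeyDepth1
    rcases le_total ((pstar (Set.Ici x)).toReal) ((pstar (Set.Iic x)).toReal) with h|h
    · calc min ((p (Set.Ici x)).toReal) ((p (Set.Iic x)).toReal)
          ≤ (p (Set.Ici x)).toReal := min_le_left _ _
        _ ≤ (1-ε)*(pstar (Set.Ici x)).toReal + ε := hupp _
        _ = (1-ε)*min ((pstar (Set.Ici x)).toReal) ((pstar (Set.Iic x)).toReal) + ε := by
            rw [min_eq_left h]
    · calc min ((p (Set.Ici x)).toReal) ((p (Set.Iic x)).toReal)
          ≤ (p (Set.Iic x)).toReal := min_le_right _ _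
        _ ≤ (1-ε)*(pstar (Set.Iic x)).toReal + ε := hupp _
        _ = (1-ε)*min ((pstar (Set.Ici x)).toReal) ((pstar (Set.Iic x)).toReal) + ε := by
            rw [min_eq_right h]
  -- symmetry: pstar (Ioi μstar) = pstar (Iio μstar)
  have hmf : Measurable (fun y : ℝ => (1:ℝ) * (y - μstar)) :=
    (measurable_id.sub_const μstar).const_mul 1
  have hIoiIio : pstar (Set.Ioi μstar) = pstar (Set.Iio μstar) := by
    have hsym1 := hsym 1
    have e1 : pstar.map (fun y : ℝ => (1:ℝ) * (y - μstar)) (Set.Ioi 0)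
        = pstar (Set.Ioi μstar) := by
      rw [Measure.map_apply hmf measurableSet_Ioi]
      congr 1
      ext y
      simp only [Set.mem_preimage, Set.mem_Ioi]
      constructor <;> intro h <;> linarith [h]
    have e2 : pstar.map (fun y : ℝ => -((1:ℝ) * (y - μstar))) (Set.Ioi 0)
        = pstar (Set.Iio μstar) := by
      rw [Measure.map_apply (f := fun y : ℝ => -((1:ℝ) * (y - μstar))) hmf.neg measurableSet_Ioi]
      congr 1
      ext y
      simp only [Set.mem_preimage, Set.mem_Ioi, Set.mem_Iio]
      constructor <;> intro h <;> linarith [h]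
    rw [← e1, ← e2, hsym1]
  -- notation for key real numbers
  set h0 : ℝ := decay1 pstar μstar 0 with hh0
  -- decay bounds at 0
  have hIoiSet : {y : ℝ | (0:ℝ) < (1:ℝ) * (y - μstar)} = Set.Ioi μstar := by
    ext y
    simp only [Set.mem_setOf_eq, Set.mem_Ioi]
    constructor <;> intro h <;> linarith [h]
  have hIioSet : {y : ℝ | (0:ℝ) < (-1:ℝ) * (y - μstar)} = Set.Iio μstar := by
    ext y
    simp only [Set.mem_setOf_eq, Set.mem_Iio]
    constructor <;> intro h <;> nlinarith [h]
  have hio_le : (pstar (Set.Ioi μstar)).toReal ≤ h0 := by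
    have := decay1Ge pstar μstar 0 1 (by norm_num)
    rwa [hIoiSet] at this
  have hii_le : (pstar (Set.Iio μstar)).toReal ≤ h0 := by
    have := decay1Ge pstar μstar 0 (-1) (by norm_num)
    rwa [hIioSet] at this
  -- complements
  have hcIci : (pstar (Set.Ici μstar)).toReal + (pstar (Set.Iio μstar)).toReal = 1 := by
    have := probToRealCompl pstar (measurableSet_Ici (a := μstar))
    rwa [Set.compl_Ici] at this
  have hcIic : (pstar (Set.Iic μstar)).toReal + (pstar (Set.Ioi μstar)).toReal = 1 := by
    have := probToRealCompl pstar (measurableSet_Iic (a := μstar))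
    rwa [Set.compl_Iic] at this
  have hioii : (pstar (Set.Ioi μstar)).toReal = (pstar (Set.Iio μstar)).toReal := by
    rw [hIoiIio]
  have hioIci : (pstar (Set.Ioi μstar)).toReal ≤ (pstar (Set.Ici μstar)).toReal :=
    ENNReal.toReal_mono (measure_ne_top _ _) (measure_mono Set.Ioi_subset_Ici_self)
  have hiiIic : (pstar (Set.Iio μstar)).toReal ≤ (pstar (Set.Iic μstar)).toReal :=
    ENNReal.toReal_mono (measure_ne_top _ _) (measure_mono Set.Iio_subset_Iic_self)
  -- depth of μstar under pstar
  have hdepthμ1 : 1 - h0 ≤ tukeyDepth1 μstar pstar := by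
    unfold tukeyDepth1
    refine le_min (by linarith) (by linarith)
  have hdepthμ2 : (1:ℝ)/2 ≤ tukeyDepth1 μstar pstar := by
    unfold tukeyDepth1
    refine le_min (by linarith) (by linarith)
  -- first max component
  have hM1 : ((1 - ε) * (1 - h0) - ε) / (1 - ε) ≤ tukeyDepth1 x pstar := by
    have chain : (1-ε)*(1-h0) ≤ (1-ε)*tukeyDepth1 x pstar + ε := by
      calc (1-ε)*(1-h0) ≤ (1-ε)*tukeyDepth1 μstar pstar :=
            mul_le_mul_of_nonneg_left hdepthμ1 h1ε.le
        _ ≤ tukeyDepth1 μstar p := hdlow μstar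
        _ ≤ tukeyDepth1 x p := hx μstar
        _ ≤ (1-ε)*tukeyDepth1 x pstar + ε := hdupp
    rw [div_le_iff₀ h1ε]
    nlinarith
  -- second max component, via existence of a median of p
  have hM2 : ((1:ℝ)/2 - ε) / (1 - ε) ≤ tukeyDepth1 x pstar := by
    obtain ⟨m, hm1, hm2⟩ := existsMedian p
    have chain : (1:ℝ)/2 ≤ (1-ε)*tukeyDepth1 x pstar + ε := by
      calc (1:ℝ)/2 ≤ tukeyDepth1 m p := le_min hm2 hm1
        _ ≤ tukeyDepth1 x p := hx m
        _ ≤ (1-ε)*tukeyDepth1 x pstar + ε := hdupp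
    rw [div_le_iff₀ h1ε]
    nlinarith
  have hmax : max (((1 - ε) * (1 - h0) - ε) / (1 - ε)) ((1/2 - ε) / (1 - ε))
      ≤ tukeyDepth1 x pstar := max_le hM1 hM2
  refine ⟨hmax, ?_⟩
  intro t ht hlt
  by_contra habs
  push_neg at habs
  have habs' : t < |x - μstar| := habs
  rcases lt_abs.1 habs' with hcase | hcase
  · -- x - μstar > t
    have hsub : Set.Ici x ⊆ {y : ℝ | t < (1:ℝ) * (y - μstar)} := by
      intro y hy
      simp only [Set.mem_setOf_eq]
      have : x ≤ y := hy
      nlinarith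
    have hle : (pstar (Set.Ici x)).toReal ≤ decay1 pstar μstar t :=
      le_trans (ENNReal.toReal_mono (measure_ne_top _ _) (measure_mono hsub))
        (decay1Ge pstar μstar t 1 (by norm_num))
    have hdx : tukeyDepth1 x pstar ≤ (pstar (Set.Ici x)).toReal := min_le_left _ _
    have := lt_of_le_of_lt (le_trans hdx hle) hlt
    exact absurd hmax (not_le.2 this)
  · -- μstar - x > t
    have hsub : Set.Iic x ⊆ {y : ℝ | t < (-1:ℝ) * (y - μstar)} := by
      intro y hy
      simp only [Set.mem_setOf_eq]
      have : y ≤ x := hy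
      nlinarith
    have hle : (pstar (Set.Iic x)).toReal ≤ decay1 pstar μstar t :=
      le_trans (ENNReal.toReal_mono (measure_ne_top _ _) (measure_mono hsub))
        (decay1Ge pstar μstar t (-1) (by norm_num))
    have hdx : tukeyDepth1 x pstar ≤ (pstar (Set.Iic x)).toReal := min_le_right _ _
    have := lt_of_le_of_lt (le_trans hdx hle) hlt
    exact absurd hmax (not_le.2 this)

end
end

section
/- (Deterministic core of Theorem 3) Let p̂ and p* be Borel probability measures on ℝ^d, let μ* ∈ ℝ^d, and let μ̂ ∈ ℝ^d satisfy D(μ̂, p̂) ≥ D(μ*, p̂) (in particular this holds if μ̂ is a Tukey median of p̂). Then D(μ̂, p*) ≥ D(μ*, p*) − 2·TV~(p̂, p*). -/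
open MeasureTheory
open scoped RealInnerProductSpace ENNReal

noncomputable section

lemma toReal_prob_le_one {d : ℕ} (p : Measure (Euc d)) [IsProbabilityMeasure p]
    (S : Set (Euc d)) : (p S).toReal ≤ 1 := by
  have h1 : p S ≤ 1 := prob_le_one
  calc (p S).toReal ≤ (1 : ℝ≥0∞).toReal := ENNReal.toReal_mono (by simp) h1
    _ = 1 := by simp

lemma halfspace_abs_le {d : ℕ} (p q : Measure (Euc d))
    [IsProbabilityMeasure p] [IsProbabilityMeasure q] (v : Euc d) (t : ℝ) :
    |(p {x | t ≤ ⟪v, x⟫}).toReal - (q {x | t ≤ ⟪v, x⟫}).toReal| ≤ halfspaceDist p q := by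
  have hb : BddAbove (Set.range fun vt : Euc d × ℝ =>
      |(p {x | vt.2 ≤ ⟪vt.1, x⟫}).toReal - (q {x | vt.2 ≤ ⟪vt.1, x⟫}).toReal|) := by
    refine ⟨1, ?_⟩
    rintro r ⟨vt, rfl⟩
    rw [abs_sub_le_iff]
    constructor
    · have := toReal_prob_le_one p {x | vt.2 ≤ ⟪vt.1, x⟫}
      have := ENNReal.toReal_nonneg (a := q {x | vt.2 ≤ ⟪vt.1, x⟫})
      linarith
    · have := toReal_prob_le_one q {x | vt.2 ≤ ⟪vt.1, x⟫}
      have := ENNReal.toReal_nonneg (a := p {x | vt.2 ≤ ⟪vt.1, x⟫})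
      linarith
  exact le_ciSup hb (v, t)

lemma halfspaceDist_nonneg {d : ℕ} (p q : Measure (Euc d))
    [IsProbabilityMeasure p] [IsProbabilityMeasure q] :
    0 ≤ halfspaceDist p q :=
  le_trans (abs_nonneg _) (halfspace_abs_le p q 0 0)

lemma depth_set_eq {d : ℕ} (v μ : Euc d) :
    {x : Euc d | 0 ≤ ⟪v, x - μ⟫} = {x : Euc d | ⟪v, μ⟫ ≤ ⟪v, x⟫} := by
  ext x
  simp [inner_sub_right, sub_nonneg]

lemma depth_compare {d : ℕ} (p q : Measure (Euc d))
    [IsProbabilityMeasure p] [IsProbabilityMeasure q] (μ : Euc d)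
    [Nonempty {v : Euc d // v ≠ 0}] :
    tukeyDepth μ p - halfspaceDist p q ≤ tukeyDepth μ q := by
  unfold tukeyDepth
  apply le_ciInf
  intro v
  have h1 : (⨅ w : {v : Euc d // v ≠ 0}, (p {x | 0 ≤ ⟪(w : Euc d), x - μ⟫}).toReal)
      ≤ (p {x | 0 ≤ ⟪(v : Euc d), x - μ⟫}).toReal := by
    apply ciInf_le
    exact ⟨0, by rintro r ⟨w, rfl⟩; exact ENNReal.toReal_nonneg⟩
  have h2 := halfspace_abs_le p q (v : Euc d) ⟪(v : Euc d), μ⟫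
  rw [← depth_set_eq] at h2
  rw [abs_sub_le_iff] at h2
  linarith [h2.1]

/-- **Deterministic core of Theorem 3.** If
`D(μ̂, p̂) ≥ D(μ*, p̂)` (in particular if `μ̂` is a Tukey median of `p̂`), then
`D(μ̂, p*) ≥ D(μ*, p*) − 2 TV~(p̂, p*)`. -/
theorem tukeyDepth_ge_of_halfspaceDist {d : ℕ}
    (phat pstar : Measure (Euc d))
    [IsProbabilityMeasure phat] [IsProbabilityMeasure pstar]
    (μstar μhat : Euc d)
    (h : tukeyDepth μstar phat ≤ tukeyDepth μhat phat) :
    tukeyDepth μstar pstar - 2 * halfspaceDist phat pstar ≤ tukeyDepth μhat pstar := by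
  by_cases hne : Nonempty {v : Euc d // v ≠ 0}
  · have e1 : tukeyDepth μstar pstar - halfspaceDist pstar phat ≤ tukeyDepth μstar phat :=
      depth_compare pstar phat μstar
    have e2 : tukeyDepth μhat phat - halfspaceDist phat pstar ≤ tukeyDepth μhat pstar :=
      depth_compare phat pstar μhat
    have hsymm : halfspaceDist pstar phat = halfspaceDist phat pstar := by
      unfold halfspaceDist
      congr 1
      funext vt
      rw [abs_sub_comm]
    rw [hsymm] at e1
    linarith
  · have hempty : IsEmpty {v : Euc d // v ≠ 0} := not_nonempty_iff.mp hne
    have hz : ∀ (μ : Euc d) (p : Measure (Euc d)), tukeyDepth μ p = 0 := by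
      intro μ p
      unfold tukeyDepth
      rw [iInf, Set.range_eq_empty, Real.sInf_empty]
    rw [hz μstar pstar, hz μhat pstar]
    have := halfspaceDist_nonneg phat pstar
    linarith

end
end
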